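/- For n = 4, any two distinct directed Hamiltonian cycles x, y on 4 vertices are adjacent as vertices of the traveling salesman polytope: there exists an integer cost vector C ∈ ℤ^{16} such that ⟨x,C⟩ = ⟨y,C⟩ < ⟨s,C⟩ for every Hamiltonian cycle s ∉ {x, y}. -/
import Mathlib


/-- A directed Hamiltonian cycle (tour) on `n` vertices, identified with its
characteristic 0/1-matrix: `x i j = 1` iff the arc `(i,j)` is in the cycle. -/
def IsTour (n : ℕ) (x : Fin n → Fin n → ℤ) : Prop :=
  ∃ σ : Equiv.Perm (Fin n), σ.IsCycle ∧ σ.support = Finset.univ ∧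
    ∀ i j, x i j = if σ i = j then 1 else 0

/-- Standard inner product of two `n × n` integer matrices/vectors. -/
def ip {n : ℕ} (x C : Fin n → Fin n → ℤ) : ℤ :=
  ∑ i, ∑ j, x i j * C i j

def tourOf (σ : Equiv.Perm (Fin 4)) : Fin 4 → Fin 4 → ℤ :=
  fun i j => if σ i = j then 1 else 0

def L : List (Equiv.Perm (Fin 4)) :=
  [[0,1,2,3], [0,1,3,2], [0,2,1,3], [0,2,3,1], [0,3,1,2], [0,3,2,1]].map List.formPerm

lemma classify : ∀ σ : Equiv.Perm (Fin 4), σ.support = Finset.univ → σ^2 ≠ 1 → σ ∈ L := by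
  decide

def Cst (σ τ : Equiv.Perm (Fin 4)) : Fin 4 → Fin 4 → ℤ :=
  fun i j => -(tourOf σ i j + tourOf τ i j)

lemma keyEq : ∀ σ ∈ L, ∀ τ ∈ L,
    ip (tourOf σ) (Cst σ τ) = ip (tourOf τ) (Cst σ τ) := by
  decide

lemma key : ∀ σ ∈ L, ∀ τ ∈ L, ∀ ρ ∈ L, tourOf σ ≠ tourOf τ →
    tourOf ρ ≠ tourOf σ → tourOf ρ ≠ tourOf τ →
    ip (tourOf σ) (Cst σ τ) < ip (tourOf ρ) (Cst σ τ) := by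
  decide

lemma tour_mem (x : Fin 4 → Fin 4 → ℤ) (hx : IsTour 4 x) :
    ∃ σ ∈ L, x = tourOf σ := by
  obtain ⟨σ, hc, hs, hv⟩ := hx
  refine ⟨σ, classify σ hs ?_, funext fun i => funext fun j => hv i j⟩
  intro h2
  have ho : orderOf σ = 4 := by
    rw [hc.orderOf, hs]; simp
  have : orderOf σ ∣ 2 := orderOf_dvd_of_pow_eq_one h2
  rw [ho] at this
  omega

/-- Any two distinct directed Hamiltonian cycles on 4 vertices are adjacent
vertices of the TSP polytope: some integer input makes exactly them optimal. -/
theorem stmt16 (x y : Fin 4 → Fin 4 → ℤ)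
    (hx : IsTour 4 x) (hy : IsTour 4 y) (hxy : x ≠ y) :
    ∃ C : Fin 4 → Fin 4 → ℤ,
      ip x C = ip y C ∧
      ∀ s : Fin 4 → Fin 4 → ℤ, IsTour 4 s → s ≠ x → s ≠ y → ip x C < ip s C := by
  obtain ⟨σ, hσ, rfl⟩ := tour_mem x hx
  obtain ⟨τ, hτ, rfl⟩ := tour_mem y hy
  refine ⟨Cst σ τ, ?_, ?_⟩
  · exact keyEq σ hσ τ hτ
  · intro s hs hsx hsy
    obtain ⟨ρ, hρ, rfl⟩ := tour_mem s hs
    exact key σ hσ τ hτ ρ hρ hxy hsx hsy
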